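/- Let n ≥ 1 and let S be a left-handed skew Boolean algebra freely generated by n distinct elements x_1,…,x_n. For a permutation (y_1,…,y_n) of (x_1,…,x_n) and 1 ≤ k ≤ n, set t(y,k) = (y_1∧⋯∧y_k)\(y_{k+1}∨⋯∨y_n) (left-associated, with t(y,n) = y_1∧⋯∧y_n). Then for permutations (y_1,…,y_n), (z_1,…,z_n) of (x_1,…,x_n) and 1 ≤ k, l ≤ n: t(y,k) D t(z,l) if and only if k = l and {y_1,…,y_k} = {z_1,…,z_l}; and t(y,k) = t(z,l) if and only if in addition y_1 = z_1. -/

import Mathlib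

universe u

/-- A skew Boolean algebra. -/
class SBA (S : Type u) where
  wedge : S → S → S
  vee : S → S → S
  diff : S → S → S
  zero : S
  wedge_assoc : ∀ x y z : S, wedge (wedge x y) z = wedge x (wedge y z)
  vee_assoc : ∀ x y z : S, vee (vee x y) z = vee x (vee y z)
  absorb1 : ∀ x y : S, wedge x (vee x y) = x
  absorb2 : ∀ x y : S, wedge (vee y x) x = x
  absorb3 : ∀ x y : S, vee x (wedge x y) = x
  absorb4 : ∀ x y : S, vee (wedge y x) x = x
  sdistrib1 : ∀ x y z : S, wedge x (vee y z) = vee (wedge x y) (wedge x z)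
  sdistrib2 : ∀ x y z : S, wedge (vee x y) z = vee (wedge x z) (wedge y z)
  zero_wedge : ∀ x : S, wedge zero x = zero
  wedge_zero : ∀ x : S, wedge x zero = zero
  zero_vee : ∀ x : S, vee zero x = x
  vee_zero : ∀ x : S, vee x zero = x
  diff_ax1 : ∀ x y : S, vee (wedge (wedge x y) x) (diff x y) = x
  diff_ax2 : ∀ x y : S, wedge (wedge (wedge x y) x) (diff x y) = zero
  diff_ax3 : ∀ x y : S, wedge (diff x y) (wedge (wedge x y) x) = zero

namespace SBA

scoped infixl:70 " ⋏ " => SBA.wedge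
scoped infixl:65 " ⋎ " => SBA.vee
scoped infixl:70 " ∖ " => SBA.diff

variable {S : Type u} [SBA S]

/-- Green's relation `D`: `x D y` iff `x⋏y⋏x = x` and `y⋏x⋏y = y`. -/
def Drel (x y : S) : Prop := x ⋏ y ⋏ x = x ∧ y ⋏ x ⋏ y = y

/-- The natural partial order: `x ≤ y` iff `x⋏y = x = y⋏x`. -/
def nle (x y : S) : Prop := x ⋏ y = x ∧ y ⋏ x = x

/-- An atom: a nonzero element with nothing strictly between it and `0`. -/
def IsAtom (a : S) : Prop := a ≠ zero ∧ ∀ x : S, nle x a → x = zero ∨ x = a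

/-- `X` generates `S`: the only subset of `S` containing `X` and `0` and closed
under the three operations is `S` itself. -/
def Generates (X : Set S) : Prop :=
  ∀ T : Set S, X ⊆ T → zero ∈ T →
    (∀ a b : S, a ∈ T → b ∈ T → a ⋏ b ∈ T ∧ a ⋎ b ∈ T ∧ a ∖ b ∈ T) →
    T = Set.univ

/-- A homomorphism of skew Boolean algebras. -/
def IsHom {T : Type u} [SBA T] (f : S → T) : Prop :=
  (∀ a b : S, f (a ⋏ b) = f a ⋏ f b) ∧ (∀ a b : S, f (a ⋎ b) = f a ⋎ f b) ∧
    (∀ a b : S, f (a ∖ b) = f a ∖ f b) ∧ f zero = zero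

end SBA

open SBA

/-- A left-handed skew Boolean algebra. -/
class LeftHanded (S : Type u) [SBA S] : Prop where
  lh_wedge : ∀ x y : S, x ⋏ y ⋏ x = x ⋏ y
  lh_vee : ∀ x y : S, x ⋎ y ⋎ x = y ⋎ x

/-- `S` is freely generated by `X` over the variety of all skew Boolean algebras. -/
def FreelyGenerates (S : Type u) [SBA S] (X : Set S) : Prop :=
  Generates X ∧
    ∀ (T : Type u) [SBA T], ∀ g : X → T,
      ∃ f : S → T, IsHom f ∧ ∀ x : X, f x = g x

/-- `S` is freely generated by `X` over the variety of left-handed skew Boolean algebras. -/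
def LFreelyGenerates (S : Type u) [SBA S] [LeftHanded S] (X : Set S) : Prop :=
  Generates X ∧
    ∀ (T : Type u) [SBA T] [LeftHanded T], ∀ g : X → T,
      ∃ f : S → T, IsHom f ∧ ∀ x : X, f x = g x

/-- Left-associated join of a list, with the empty join being `0`. -/
def listJoin {S : Type u} [SBA S] : List S → S
  | [] => SBA.zero
  | h :: t => t.foldl SBA.vee h

/-- Left-associated meet of a list, with the empty meet being `0`. -/
def listMeet {S : Type u} [SBA S] : List S → S
  | [] => SBA.zero
  | h :: t => t.foldl SBA.wedge h

/-- The term `(y₁⋏⋯⋏y_k) ∖ (y_{k+1}⋎⋯⋎y_n)` built from the list `l = [y₁,…,y_n]`,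
which for `k = n` is just `y₁⋏⋯⋏y_n`. -/
def atomTerm {S : Type u} [SBA S] (l : List S) (k : ℕ) : S :=
  if k < l.length then SBA.diff (listMeet (l.take k)) (listJoin (l.drop k))
  else listMeet l


set_option linter.unusedSectionVars false
section PartA
variable {S : Type u} [SBA S] [LeftHanded S]

open SBA in
attribute [local simp] SBA.wedge_assoc SBA.vee_assoc SBA.zero_wedge SBA.wedge_zero
  SBA.zero_vee SBA.vee_zero SBA.absorb1 SBA.absorb2 SBA.absorb3 SBA.absorb4

lemma lhw (x y : S) : x ⋏ y ⋏ x = x ⋏ y := LeftHanded.lh_wedge x y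
lemma lhv (x y : S) : x ⋎ y ⋎ x = y ⋎ x := LeftHanded.lh_vee x y

lemma wedge_idem (x : S) : x ⋏ x = x := by
  have h := SBA.absorb1 x (x ⋏ x)
  rwa [SBA.absorb3 x x] at h

lemma vee_idem (x : S) : x ⋎ x = x := by
  have h := SBA.absorb3 x (x ⋎ x)
  rwa [SBA.absorb1 x x] at h

/-- Uniqueness of complements. -/
lemma sba_compl_unique {c u v t : S} (hcu : c ⋏ u = SBA.zero) (hcv : c ⋏ v = SBA.zero)
    (hu : c ⋎ u = t) (hv : c ⋎ v = t) : u = v := by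
  have h1 : u = v ⋏ u := by
    have : (c ⋎ v) ⋏ u = u := by rw [hv, ← hu]; exact SBA.absorb2 u c
    rw [SBA.sdistrib2, hcu, SBA.zero_vee] at this
    exact this.symm
  have h2 : v = u ⋏ v := by
    have : (c ⋎ u) ⋏ v = v := by rw [hu, ← hv]; exact SBA.absorb2 v c
    rw [SBA.sdistrib2, hcv, SBA.zero_vee] at this
    exact this.symm
  calc u = v ⋏ u := h1
    _ = (u ⋏ v) ⋏ u := by rw [← h2]
    _ = u ⋏ v := lhw u v
    _ = v := h2.symm

lemma dax1 (x y : S) : (x ⋏ y) ⋎ (x ∖ y) = x := by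
  have := SBA.diff_ax1 x y; rwa [lhw] at this
lemma dax2 (x y : S) : (x ⋏ y) ⋏ (x ∖ y) = SBA.zero := by
  have := SBA.diff_ax2 x y; rwa [lhw] at this
lemma dax3 (x y : S) : (x ∖ y) ⋏ (x ⋏ y) = SBA.zero := by
  have := SBA.diff_ax3 x y; rwa [lhw] at this

lemma wedge_diff (x y : S) : x ⋏ (x ∖ y) = x ∖ y := by
  have := SBA.absorb2 (x ∖ y) (x ⋏ y)
  rwa [dax1] at this

lemma diff_wedge (x y : S) : (x ∖ y) ⋏ x = x ∖ y := by
  have h : (x ∖ y) ⋏ ((x ⋏ y) ⋎ (x ∖ y)) = x ∖ y := by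
    rw [SBA.sdistrib1, dax3, SBA.zero_vee, wedge_idem]
  rwa [dax1] at h

lemma diff_wedge_arg (x y : S) : (x ∖ y) ⋏ y = SBA.zero := by
  have : (x ∖ y) ⋏ (x ⋏ y) = SBA.zero := dax3 x y
  rwa [← SBA.wedge_assoc, diff_wedge] at this

/-- Disjoint elements commute under join. -/
lemma vee_comm_of_disj {a b : S} (h : b ⋏ a = SBA.zero) : a ⋎ b = b ⋎ a := by
  have hs : (a ⋎ b) ⋏ a = a := by
    rw [SBA.sdistrib2, h, wedge_idem, SBA.vee_zero]
  have h2 : (a ⋎ b) ⋎ ((a ⋎ b) ⋏ a) = a ⋎ b := SBA.absorb3 _ _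
  rw [hs] at h2
  rw [lhv] at h2
  exact h2.symm

lemma vee_of_wedge_eq {p q : S} (h : p ⋏ q = p) : p ⋎ q = q := by
  have := SBA.absorb4 q p; rwa [h] at this

/-- Meet only depends on the D-class of the right argument. -/
lemma wedge_Dcong {p q : S} (hpq : p ⋏ q = p) (hqp : q ⋏ p = q) (x : S) :
    x ⋏ p = x ⋏ q := by
  have hpvq : p ⋎ q = q := vee_of_wedge_eq hpq
  have hqvp : q ⋎ p = p := vee_of_wedge_eq hqp
  set c := x ∖ p with hc
  have hcp : c ⋏ p = SBA.zero := diff_wedge_arg x p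
  have hcq : c ⋏ q = SBA.zero := by
    have h3 : c ⋏ (q ⋎ p) = (c ⋏ q) ⋎ (c ⋏ p) := SBA.sdistrib1 c q p
    rw [hqvp, hcp, SBA.vee_zero] at h3
    exact h3.symm
  have hcxp : c ⋏ (x ⋏ p) = SBA.zero := by
    rw [← SBA.wedge_assoc, diff_wedge, hcp]
  have hcxq : c ⋏ (x ⋏ q) = SBA.zero := by
    rw [← SBA.wedge_assoc, diff_wedge, hcq]
  have hup : c ⋎ (x ⋏ p) = x := by
    rw [← vee_comm_of_disj hcxp]; exact dax1 x p
  have huq : c ⋎ (x ⋏ q) = x := by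
    have hxq : x ⋏ q = (x ⋏ p) ⋎ (x ⋏ q) := by
      rw [← SBA.sdistrib1, hpvq]
    rw [hxq, ← SBA.vee_assoc, hup, SBA.absorb3]
  exact sba_compl_unique hcxp hcxq hup huq

/-- Left normality. -/
lemma normal (x y z : S) : x ⋏ y ⋏ z = x ⋏ z ⋏ y := by
  have h1 : (y ⋏ z) ⋏ (z ⋏ y) = y ⋏ z := by
    rw [SBA.wedge_assoc y z, ← SBA.wedge_assoc z z, wedge_idem, ← SBA.wedge_assoc, lhw]
  have h2 : (z ⋏ y) ⋏ (y ⋏ z) = z ⋏ y := by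
    rw [SBA.wedge_assoc z y, ← SBA.wedge_assoc y y, wedge_idem, ← SBA.wedge_assoc, lhw]
  rw [SBA.wedge_assoc, SBA.wedge_assoc]
  exact wedge_Dcong h1 h2 x

lemma diff_congr {x y z : S} (h : x ⋏ y = x ⋏ z) : x ∖ y = x ∖ z := by
  refine sba_compl_unique (c := x ⋏ y) (t := x) (dax2 x y) ?_ (dax1 x y) ?_
  · rw [h]; exact dax2 x z
  · rw [h]; exact dax1 x z

end PartA

section PartB
variable {S : Type u} [SBA S] [LeftHanded S]


-- fold lemmas for wedge
lemma fold_wedge_right (l : List S) : ∀ m a : S,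
    (l.foldl SBA.wedge m) ⋏ a = l.foldl SBA.wedge (m ⋏ a) := by
  induction l with
  | nil => intro m a; rfl
  | cons h t ih =>
    intro m a
    simp only [List.foldl_cons]
    rw [ih, normal]

lemma fold_wedge_left (l : List S) : ∀ m s : S,
    m ⋏ (l.foldl SBA.wedge s) = l.foldl SBA.wedge (m ⋏ s) := by
  induction l with
  | nil => intro m s; rfl
  | cons h t ih =>
    intro m s
    simp only [List.foldl_cons]
    rw [ih, SBA.wedge_assoc]

lemma fold_wedge_perm {l₁ l₂ : List S} (h : l₁.Perm l₂) : ∀ m : S,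
    l₁.foldl SBA.wedge m = l₂.foldl SBA.wedge m := by
  induction h with
  | nil => intro m; rfl
  | cons x h ih => intro m; simp only [List.foldl_cons]; exact ih _
  | swap x y l => intro m; simp only [List.foldl_cons]; rw [normal]
  | trans h1 h2 ih1 ih2 => intro m; rw [ih1, ih2]

lemma fold_fold (l : List S) : ∀ m : S,
    l.foldl SBA.wedge (l.foldl SBA.wedge m) = l.foldl SBA.wedge m := by
  induction l with
  | nil => intro m; rfl
  | cons a t ih =>
    intro m
    simp only [List.foldl_cons]
    have h1 : (t.foldl SBA.wedge (m ⋏ a)) ⋏ a = t.foldl SBA.wedge (m ⋏ a) := by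
      rw [fold_wedge_right, SBA.wedge_assoc, wedge_idem]
    rw [h1, ih]

lemma meet_self_fold (h : S) (t : List S) :
    (h :: t).foldl SBA.wedge (t.foldl SBA.wedge h) = t.foldl SBA.wedge h := by
  simp only [List.foldl_cons]
  have h1 : (t.foldl SBA.wedge h) ⋏ h = t.foldl SBA.wedge h := by
    rw [fold_wedge_right, wedge_idem]
  rw [h1, fold_fold]

/-- meets over permuted nonempty lists absorb each other -/
lemma meet_perm_absorb {h₁ h₂ : S} {t₁ t₂ : List S}
    (hp : (h₁ :: t₁).Perm (h₂ :: t₂)) :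
    (listMeet (h₁ :: t₁)) ⋏ (listMeet (h₂ :: t₂)) = listMeet (h₁ :: t₁) := by
  show (t₁.foldl SBA.wedge h₁) ⋏ (t₂.foldl SBA.wedge h₂) = t₁.foldl SBA.wedge h₁
  rw [fold_wedge_left]
  have : (t₂.foldl SBA.wedge ((t₁.foldl SBA.wedge h₁) ⋏ h₂)) =
      (h₂ :: t₂).foldl SBA.wedge (t₁.foldl SBA.wedge h₁) := rfl
  rw [this, ← fold_wedge_perm hp, meet_self_fold]

-- join lemmas
lemma fold_vee_left (l : List S) : ∀ m s : S,
    m ⋎ (l.foldl SBA.vee s) = l.foldl SBA.vee (m ⋎ s) := by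
  induction l with
  | nil => intro m s; rfl
  | cons h t ih =>
    intro m s
    simp only [List.foldl_cons]
    rw [ih, SBA.vee_assoc]

lemma listJoin_cons (a : S) (t : List S) : listJoin (a :: t) = a ⋎ listJoin t := by
  cases t with
  | nil => show a = a ⋎ SBA.zero; rw [SBA.vee_zero]
  | cons h t' =>
    show (h :: t').foldl SBA.vee a = a ⋎ (t'.foldl SBA.vee h)
    rw [fold_vee_left]
    rfl

lemma vee_DcommL (a b : S) : (a ⋎ b) ⋏ (b ⋎ a) = a ⋎ b := by
  rw [← lhv a b, SBA.absorb1]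

lemma wedge_join_perm {l₁ l₂ : List S} (h : l₁.Perm l₂) : ∀ m : S,
    m ⋏ listJoin l₁ = m ⋏ listJoin l₂ := by
  induction h with
  | nil => intro m; rfl
  | cons x h ih =>
    intro m
    rw [listJoin_cons, listJoin_cons, SBA.sdistrib1, SBA.sdistrib1, ih]
  | swap x y l =>
    intro m
    rw [listJoin_cons, listJoin_cons, listJoin_cons, listJoin_cons,
      ← SBA.vee_assoc, ← SBA.vee_assoc, SBA.sdistrib1 m (y ⋎ x) (listJoin l),
      SBA.sdistrib1 m (x ⋎ y) (listJoin l)]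
    have := wedge_Dcong (vee_DcommL y x) (vee_DcommL x y) m
    rw [this]
  | trans h1 h2 ih1 ih2 => intro m; rw [ih1, ih2]

end PartB

section PartB2
variable {S : Type u} [SBA S] [LeftHanded S]

lemma meet_perm_absorb2 {l₁ l₂ : List S} (h : l₁.Perm l₂) (hne : l₁ ≠ []) :
    (listMeet l₁) ⋏ (listMeet l₂) = listMeet l₁ := by
  cases l₁ with
  | nil => exact absurd rfl hne
  | cons h₁ t₁ =>
    cases l₂ with
    | nil => exact absurd h.eq_nil (by simp)
    | cons h₂ t₂ => exact meet_perm_absorb h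

lemma meet_perm_head (h : S) {t₁ t₂ : List S} (hp : t₁.Perm t₂) :
    listMeet (h :: t₁) = listMeet (h :: t₂) := fold_wedge_perm hp h

end PartB2

section PartC

inductive PP : Type u where
  | z | a | b

namespace PP

instance : DecidableEq PP := fun x y => by
  cases x <;> cases y <;> first
    | exact isTrue rfl
    | exact isFalse (fun h => PP.noConfusion h)

def pw : PP → PP → PP
  | .z, _ => .z
  | _, .z => .z
  | x, _ => x

def pv : PP → PP → PP
  | x, .z => x
  | _, y => y

def pd : PP → PP → PP
  | x, .z => x
  | _, _ => .z

instance instSBA : SBA PP where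
  wedge := pw
  vee := pv
  diff := pd
  zero := .z
  wedge_assoc := by intro x y z; cases x <;> cases y <;> cases z <;> rfl
  vee_assoc := by intro x y z; cases x <;> cases y <;> cases z <;> rfl
  absorb1 := by intro x y; cases x <;> cases y <;> rfl
  absorb2 := by intro x y; cases x <;> cases y <;> rfl
  absorb3 := by intro x y; cases x <;> cases y <;> rfl
  absorb4 := by intro x y; cases x <;> cases y <;> rfl
  sdistrib1 := by intro x y z; cases x <;> cases y <;> cases z <;> rfl
  sdistrib2 := by intro x y z; cases x <;> cases y <;> cases z <;> rfl
  zero_wedge := by intro x; cases x <;> rfl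
  wedge_zero := by intro x; cases x <;> rfl
  zero_vee := by intro x; cases x <;> rfl
  vee_zero := by intro x; cases x <;> rfl
  diff_ax1 := by intro x y; cases x <;> cases y <;> rfl
  diff_ax2 := by intro x y; cases x <;> cases y <;> rfl
  diff_ax3 := by intro x y; cases x <;> cases y <;> rfl

instance instLH : LeftHanded PP where
  lh_wedge := by intro x y; cases x <;> cases y <;> rfl
  lh_vee := by intro x y; cases x <;> cases y <;> rfl

lemma pw_nz (m h : PP) (hm : m ≠ .z) (hh : h ≠ .z) : m ⋏ h = m := by
  revert hm hh; cases m <;> cases h <;> decide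

lemma pw_zr (m h : PP) (hm : m = .z ∨ h = .z) : m ⋏ h = .z := by
  revert hm; cases m <;> cases h <;> decide

lemma pv_ne (m h : PP) (hm : m ≠ .z ∨ h ≠ .z) : (m ⋎ h) ≠ .z := by
  revert hm; cases m <;> cases h <;> decide

lemma pv_zz : ((.z : PP) ⋎ .z) = .z := rfl

lemma pmeet_nonzero : ∀ (t : List PP) (m : PP), m ≠ .z → (∀ s ∈ t, s ≠ .z) →
    t.foldl SBA.wedge m = m := by
  intro t
  induction t with
  | nil => intro m _ _; rfl
  | cons h t ih =>
    intro m hm ht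
    show t.foldl SBA.wedge (m ⋏ h) = m
    rw [pw_nz m h hm (ht h (List.mem_cons_self))]
    exact ih m hm (fun s hs => ht s (List.mem_cons_of_mem h hs))

lemma pmeet_zero : ∀ (t : List PP) (m : PP), (m = .z ∨ ∃ s ∈ t, s = .z) →
    t.foldl SBA.wedge m = .z := by
  intro t
  induction t with
  | nil =>
    intro m hm
    rcases hm with h | ⟨s, hs, _⟩
    · exact h
    · exact absurd hs (List.not_mem_nil)
  | cons h t ih =>
    intro m hm
    show t.foldl SBA.wedge (m ⋏ h) = .z
    apply ih
    rcases hm with rfl | ⟨s, hs, rfl⟩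
    · left; exact pw_zr _ _ (Or.inl rfl)
    · rcases List.mem_cons.1 hs with rfl | hs'
      · left; exact pw_zr _ _ (Or.inr rfl)
      · right; exact ⟨.z, hs', rfl⟩

lemma pjoin_zero : ∀ (l : List PP), (∀ s ∈ l, s = .z) → listJoin l = .z := by
  intro l
  induction l with
  | nil => intro _; rfl
  | cons h t ih =>
    intro hl
    rw [listJoin_cons, hl h (List.mem_cons_self),
      ih (fun s hs => hl s (List.mem_cons_of_mem h hs))]
    rfl

lemma pjoin_ne : ∀ (t : List PP) (m : PP), (m ≠ .z ∨ ∃ s ∈ t, s ≠ .z) →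
    t.foldl SBA.vee m ≠ .z := by
  intro t
  induction t with
  | nil =>
    intro m hm
    rcases hm with h | ⟨s, hs, _⟩
    · exact h
    · exact absurd hs (List.not_mem_nil)
  | cons h t ih =>
    intro m hm
    show t.foldl SBA.vee (m ⋎ h) ≠ .z
    apply ih
    rcases hm with h' | ⟨s, hs, hsz⟩
    · left; exact pv_ne _ _ (Or.inl h')
    · rcases List.mem_cons.1 hs with rfl | hs'
      · left; exact pv_ne _ _ (Or.inr hsz)
      · right; exact ⟨s, hs', hsz⟩

lemma pjoin_mem_nonzero (l : List PP) (s : PP) (hs : s ∈ l) (hsz : s ≠ .z) :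
    listJoin l ≠ .z := by
  cases l with
  | nil => exact absurd hs (List.not_mem_nil)
  | cons h t =>
    show t.foldl SBA.vee h ≠ .z
    apply pjoin_ne
    rcases List.mem_cons.1 hs with rfl | hs'
    · exact Or.inl hsz
    · exact Or.inr ⟨s, hs', hsz⟩

lemma pdiff_zero (x : PP) : x ∖ (.z : PP) = x := by cases x <;> rfl
lemma pdiff_nonzero (x y : PP) (hy : y ≠ .z) : x ∖ y = .z := by
  revert hy; cases x <;> cases y <;> decide
lemma pdiff_zero_left (y : PP) : (.z : PP) ∖ y = .z := by cases y <;> rfl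

lemma not_Drel_a_z : ¬ Drel (.a : PP) .z := by
  intro h; exact absurd h.1 (by decide)
lemma a_ne_b : (.a : PP) ≠ .b := by decide

end PP
end PartC

section PartD
open SBA
variable {S : Type u} [SBA S] [LeftHanded S]
variable {T : Type u} [SBA T] [LeftHanded T]

lemma hom_fold_wedge {f : S → T} (hf : IsHom f) : ∀ (l : List S) (m : S),
    f (l.foldl SBA.wedge m) = (l.map f).foldl SBA.wedge (f m) := by
  intro l
  induction l with
  | nil => intro m; rfl
  | cons h t ih => intro m; simp only [List.foldl_cons, List.map_cons]; rw [ih, hf.1]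

lemma hom_fold_vee {f : S → T} (hf : IsHom f) : ∀ (l : List S) (m : S),
    f (l.foldl SBA.vee m) = (l.map f).foldl SBA.vee (f m) := by
  intro l
  induction l with
  | nil => intro m; rfl
  | cons h t ih => intro m; simp only [List.foldl_cons, List.map_cons]; rw [ih, hf.2.1]

lemma hom_listMeet {f : S → T} (hf : IsHom f) (l : List S) :
    f (listMeet l) = listMeet (l.map f) := by
  cases l with
  | nil => exact hf.2.2.2
  | cons h t => exact hom_fold_wedge hf t h

lemma hom_listJoin {f : S → T} (hf : IsHom f) (l : List S) :
    f (listJoin l) = listJoin (l.map f) := by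
  cases l with
  | nil => exact hf.2.2.2
  | cons h t => exact hom_fold_vee hf t h

lemma hom_atomTerm {f : S → T} (hf : IsHom f) (l : List S) (k : ℕ) :
    f (atomTerm l k) = atomTerm (l.map f) k := by
  unfold atomTerm
  rw [List.length_map]
  by_cases hk : k < l.length
  · rw [if_pos hk, if_pos hk, hf.2.2.1, hom_listMeet hf, hom_listJoin hf,
      List.map_take, List.map_drop]
  · rw [if_neg hk, if_neg hk, hom_listMeet hf]

lemma hom_Drel {f : S → T} (hf : IsHom f) {u v : S} (h : Drel u v) :
    Drel (f u) (f v) := by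
  constructor
  · rw [← hf.1, ← hf.1, h.1]
  · rw [← hf.1, ← hf.1, h.2]

lemma Drel_refl (u : S) : Drel u u := by
  constructor <;> rw [wedge_idem, wedge_idem]

lemma Drel_of (u v : S) (h1 : u ⋏ v = u) (h2 : v ⋏ u = v) : Drel u v := by
  constructor
  · rw [h1, wedge_idem]
  · rw [h2, wedge_idem]

end PartD

section PartD2
open SBA
variable {S : Type u} [SBA S] [LeftHanded S]

lemma Drel_zero {w : S} (h : Drel w SBA.zero) : w = SBA.zero := by
  have h1 := h.1
  rw [SBA.wedge_zero, SBA.zero_wedge] at h1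
  exact h1.symm

lemma diff_wedge_diff {m₁ m₂ j₁ j₂ : S} (h12 : m₁ ⋏ m₂ = m₁)
    (hj : ∀ w : S, w ⋏ j₁ = w ⋏ j₂) :
    (m₁ ∖ j₁) ⋏ (m₂ ∖ j₂) = m₁ ∖ j₁ := by
  set u := m₁ ∖ j₁ with hu
  set v := m₂ ∖ j₂ with hv
  have hum1 : u ⋏ m₁ = u := diff_wedge m₁ j₁
  have hum2 : u ⋏ m₂ = u := by
    calc u ⋏ m₂ = (u ⋏ m₁) ⋏ m₂ := by rw [hum1]
    _ = u ⋏ (m₁ ⋏ m₂) := SBA.wedge_assoc u m₁ m₂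
    _ = u ⋏ m₁ := by rw [h12]
    _ = u := hum1
  have huj2 : u ⋏ j₂ = SBA.zero := by
    calc u ⋏ j₂ = u ⋏ j₁ := (hj u).symm
    _ = (u ⋏ m₁) ⋏ j₁ := by rw [hum1]
    _ = u ⋏ (m₁ ⋏ j₁) := SBA.wedge_assoc u m₁ j₁
    _ = SBA.zero := dax3 m₁ j₁
  have hm2 : (m₂ ⋏ j₂) ⋎ v = m₂ := dax1 m₂ j₂
  have e1 : u ⋏ m₂ = (u ⋏ (m₂ ⋏ j₂)) ⋎ (u ⋏ v) := by
    conv_lhs => rw [← hm2]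
    exact SBA.sdistrib1 u (m₂ ⋏ j₂) v
  have e2 : u ⋏ (m₂ ⋏ j₂) = SBA.zero := by
    rw [← SBA.wedge_assoc, hum2, huj2]
  rw [e2, SBA.zero_vee, hum2] at e1
  exact e1.symm

lemma Drel_diff {m₁ m₂ j₁ j₂ : S} (h12 : m₁ ⋏ m₂ = m₁) (h21 : m₂ ⋏ m₁ = m₂)
    (hj : ∀ w : S, w ⋏ j₁ = w ⋏ j₂) :
    Drel (m₁ ∖ j₁) (m₂ ∖ j₂) :=
  Drel_of _ _ (diff_wedge_diff h12 hj) (diff_wedge_diff h21 (fun w => (hj w).symm))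

end PartD2

section PartE
open SBA

namespace PP

instance : Inhabited PP := ⟨.z⟩

lemma take_ne_nil {L : List PP} {k : ℕ} (hk1 : 1 ≤ k) (hk : k ≤ L.length) :
    ∃ h t, L.take k = h :: t := by
  cases hT : L.take k with
  | nil =>
    have : (L.take k).length = min k L.length := List.length_take
    rw [hT] at this
    simp at this
    omega
  | cons h t => exact ⟨h, t, rfl⟩

lemma patom_pos (L : List PP) (k : ℕ) (hk1 : 1 ≤ k) (hk : k ≤ L.length)
    (hpos : ∀ s ∈ L.take k, s ≠ .z) (hneg : ∀ s ∈ L.drop k, s = .z) :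
    atomTerm L k = (L.take k).headI ∧ (L.take k).headI ≠ .z := by
  obtain ⟨h, t, hT⟩ := take_ne_nil hk1 hk
  have hh : h ≠ .z := hpos h (by rw [hT]; exact List.mem_cons_self)
  have hmeet : listMeet (L.take k) = h := by
    rw [hT]
    show t.foldl SBA.wedge h = h
    exact pmeet_nonzero t h hh (fun s hs => hpos s (by rw [hT]; exact List.mem_cons_of_mem h hs))
  have hhead : (L.take k).headI = h := by rw [hT]; rfl
  refine ⟨?_, by rw [hhead]; exact hh⟩
  unfold atomTerm
  by_cases hlt : k < L.length
  · rw [if_pos hlt, hmeet, pjoin_zero _ hneg, hhead]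
    exact pdiff_zero h
  · rw [if_neg hlt]
    have hkl : k = L.length := by omega
    have hTL : L.take k = L := by rw [hkl]; exact List.take_length
    conv_lhs => rw [← hTL]
    rw [hmeet, hhead]

lemma patom_zero_meet (L : List PP) (k : ℕ) (hk1 : 1 ≤ k) (hk : k ≤ L.length)
    (h0 : ∃ s ∈ L.take k, s = .z) : atomTerm L k = .z := by
  obtain ⟨h, t, hT⟩ := take_ne_nil hk1 hk
  obtain ⟨s, hs, rfl⟩ := h0
  have hmeet : listMeet (L.take k) = .z := by
    rw [hT]
    show t.foldl SBA.wedge h = .z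
    apply pmeet_zero
    rw [hT] at hs
    rcases List.mem_cons.1 hs with rfl | hs'
    · exact Or.inl rfl
    · exact Or.inr ⟨_, hs', rfl⟩
  unfold atomTerm
  by_cases hlt : k < L.length
  · rw [if_pos hlt, hmeet]
    exact pdiff_zero_left _
  · rw [if_neg hlt]
    have hkl : k = L.length := by omega
    have hTL : L.take k = L := by rw [hkl]; exact List.take_length
    conv_lhs => rw [← hTL]
    exact hmeet

lemma patom_zero_join (L : List PP) (k : ℕ) (hlt : k < L.length)
    (hex : ∃ s ∈ L.drop k, s ≠ .z) : atomTerm L k = .z := by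
  obtain ⟨s, hs, hsz⟩ := hex
  unfold atomTerm
  rw [if_pos hlt]
  exact pdiff_nonzero _ _ (pjoin_mem_nonzero _ s hs hsz)

end PP
end PartE

theorem stmt5 (n : ℕ) (hn : 1 ≤ n) (S : Type u) [SBA S] [LeftHanded S]
    (x : Fin n → S) (hinj : Function.Injective x)
    (hfree : LFreelyGenerates S (Set.range x))
    (ly lz : List S) (hy : List.Perm ly (List.ofFn x)) (hz : List.Perm lz (List.ofFn x))
    (k l : ℕ) (hk1 : 1 ≤ k) (hkn : k ≤ n) (hl1 : 1 ≤ l) (hln : l ≤ n) :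
    (Drel (atomTerm ly k) (atomTerm lz l) ↔
      k = l ∧ {s : S | s ∈ ly.take k} = {s : S | s ∈ lz.take l}) ∧
    (atomTerm ly k = atomTerm lz l ↔
      k = l ∧ {s : S | s ∈ ly.take k} = {s : S | s ∈ lz.take l} ∧
        ly.head? = lz.head?) := by
  classical
  have hlenF : (List.ofFn x).length = n := List.length_ofFn
  have hleny : ly.length = n := by rw [hy.length_eq, hlenF]
  have hlenz : lz.length = n := by rw [hz.length_eq, hlenF]
  have hndF : (List.ofFn x).Nodup := List.nodup_ofFn.mpr hinj
  have hndy : ly.Nodup := hy.nodup_iff.mpr hndF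
  have hndz : lz.Nodup := hz.nodup_iff.mpr hndF
  have hyz : ly.Perm lz := hy.trans hz.symm
  have hmemR : ∀ s : S, s ∈ ly → s ∈ Set.range x := by
    intro s hs
    have h2 := hy.subset hs
    rwa [List.mem_ofFn] at h2
  have hmemRz : ∀ s : S, s ∈ lz → s ∈ Set.range x := by
    intro s hs
    have h2 := hz.subset hs
    rwa [List.mem_ofFn] at h2
  obtain ⟨hy0, ty0, hly⟩ : ∃ h t, ly = h :: t := by
    cases ly with
    | nil => exfalso; simp at hleny; omega
    | cons h t => exact ⟨h, t, rfl⟩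
  obtain ⟨hz0, tz0, hlz⟩ : ∃ h t, lz = h :: t := by
    cases lz with
    | nil => exfalso; simp at hlenz; omega
    | cons h t => exact ⟨h, t, rfl⟩
  have getHom : ∀ col : S → PP.{u}, ∃ f : S → PP.{u},
      IsHom f ∧ ∀ s : S, s ∈ Set.range x → f s = col s := by
    intro col
    obtain ⟨f, hf, hfx⟩ := hfree.2 PP.{u} (fun s => col s.val)
    exact ⟨f, hf, fun s hs => hfx ⟨s, hs⟩⟩
  have hsplitY : ∀ s : S, s ∈ ly ↔ s ∈ ly.take k ∨ s ∈ ly.drop k := by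
    intro s
    conv_lhs => rw [← List.take_append_drop k ly]
    exact List.mem_append
  have hsplitZ : ∀ s : S, s ∈ lz ↔ s ∈ lz.take l ∨ s ∈ lz.drop l := by
    intro s
    conv_lhs => rw [← List.take_append_drop l lz]
    exact List.mem_append
  have hdisjY : List.Disjoint (ly.take k) (ly.drop k) := List.disjoint_take_drop hndy le_rfl
  have hdisjZ : List.Disjoint (lz.take l) (lz.drop l) := List.disjoint_take_drop hndz le_rfl
  have ndT1 : (ly.take k).Nodup := List.Nodup.sublist (List.take_sublist k ly) hndy
  have ndT2 : (lz.take l).Nodup := List.Nodup.sublist (List.take_sublist l lz) hndz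
  have ndD1 : (ly.drop k).Nodup := List.Nodup.sublist (List.drop_sublist k ly) hndy
  have ndD2 : (lz.drop l).Nodup := List.Nodup.sublist (List.drop_sublist l lz) hndz
  -- forward direction, Drel version
  have fwd : Drel (atomTerm ly k) (atomTerm lz l) →
      k = l ∧ {s : S | s ∈ ly.take k} = {s : S | s ∈ lz.take l} := by
    intro hD
    have hAB : {s : S | s ∈ ly.take k} = {s : S | s ∈ lz.take l} := by
      by_contra hne
      obtain ⟨f, hf, hfv⟩ := getHom (fun s => if s ∈ ly.take k then PP.a else PP.z)
      have hfta : f (atomTerm ly k) ≠ SBA.zero := by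
        rw [hom_atomTerm hf]
        have h := PP.patom_pos (ly.map f) k hk1 (by rw [List.length_map]; omega)
          (by
            intro s hs
            rw [← List.map_take] at hs
            obtain ⟨s0, hs0, rfl⟩ := List.mem_map.1 hs
            rw [hfv s0 (hmemR s0 (List.take_subset k ly hs0)), if_pos hs0]
            exact fun hc => PP.noConfusion hc)
          (by
            intro s hs
            rw [← List.map_drop] at hs
            obtain ⟨s0, hs0, rfl⟩ := List.mem_map.1 hs
            rw [hfv s0 (hmemR s0 (List.drop_subset k ly hs0)),
              if_neg (fun hc => hdisjY hc hs0)])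
        rw [h.1]; exact h.2
      have hftz : f (atomTerm lz l) = SBA.zero := by
        rw [hom_atomTerm hf]
        by_cases hex : ∃ s ∈ lz.take l, s ∉ ly.take k
        · obtain ⟨w, hwB, hwA⟩ := hex
          apply PP.patom_zero_meet (lz.map f) l hl1 (by rw [List.length_map]; omega)
          refine ⟨f w, ?_, ?_⟩
          · rw [← List.map_take]; exact List.mem_map_of_mem hwB
          · rw [hfv w (hmemRz w (List.take_subset l lz hwB)), if_neg hwA]
        · push_neg at hex
          have hBA : {s : S | s ∈ lz.take l} ⊆ {s : S | s ∈ ly.take k} := hex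
          obtain ⟨a₀, ha₀A, ha₀B⟩ :=
            Set.not_subset.1 (fun hsub => hne (Set.Subset.antisymm hsub hBA))
          have ha₀A' : a₀ ∈ ly.take k := ha₀A
          have ha₀B' : a₀ ∉ lz.take l := ha₀B
          have ha₀z : a₀ ∈ lz := hyz.subset (List.take_subset k ly ha₀A')
          have ha₀d : a₀ ∈ lz.drop l := by
            rcases (hsplitZ a₀).1 ha₀z with h | h
            · exact absurd h ha₀B'
            · exact h
          have hlt : l < lz.length := by
            by_contra hge
            rw [List.drop_eq_nil_of_le (by omega)] at ha₀d
            exact absurd ha₀d (List.not_mem_nil)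
          apply PP.patom_zero_join (lz.map f) l (by rw [List.length_map]; omega)
          refine ⟨f a₀, ?_, ?_⟩
          · rw [← List.map_drop]; exact List.mem_map_of_mem ha₀d
          · rw [hfv a₀ (hmemRz a₀ ha₀z), if_pos ha₀A']
            exact fun hc => PP.noConfusion hc
      have hD2 := hom_Drel hf hD
      rw [hftz] at hD2
      exact hfta (Drel_zero hD2)
    refine ⟨?_, hAB⟩
    have hcA : (ly.take k).toFinset = (lz.take l).toFinset := by
      apply Finset.coe_injective
      rw [List.coe_toFinset, List.coe_toFinset]
      exact hAB
    have h1 : (ly.take k).toFinset.card = k := by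
      rw [List.card_toFinset, ndT1.dedup, List.length_take, hleny]
      exact min_eq_left hkn
    have h2 : (lz.take l).toFinset.card = l := by
      rw [List.card_toFinset, ndT2.dedup, List.length_take, hlenz]
      exact min_eq_left hln
    rw [← h1, ← h2, hcA]
  -- forward direction, heads
  have fwdHead : atomTerm ly k = atomTerm lz l →
      {s : S | s ∈ ly.take k} = {s : S | s ∈ lz.take l} → hy0 = hz0 := by
    intro heq hAB
    by_contra hne
    obtain ⟨f, hf, hfv⟩ := getHom
      (fun s => if s = hy0 then PP.a else if s ∈ ly.take k then PP.b else PP.z)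
    obtain ⟨k', hk'⟩ : ∃ k', k = k' + 1 := ⟨k - 1, by omega⟩
    obtain ⟨l', hl'⟩ : ∃ l', l = l' + 1 := ⟨l - 1, by omega⟩
    have hT1 : ly.take k = hy0 :: ty0.take k' := by
      rw [hly, hk', List.take_succ_cons]
    have hT2 : lz.take l = hz0 :: tz0.take l' := by
      rw [hlz, hl', List.take_succ_cons]
    have hy0T : hy0 ∈ ly.take k := by rw [hT1]; exact List.mem_cons_self
    have hz0T : hz0 ∈ lz.take l := by rw [hT2]; exact List.mem_cons_self
    have hz0A : hz0 ∈ ly.take k := by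
      have : hz0 ∈ {s : S | s ∈ lz.take l} := hz0T
      rw [← hAB] at this
      exact this
    have hy0B : hy0 ∈ lz.take l := by
      have : hy0 ∈ {s : S | s ∈ ly.take k} := hy0T
      rw [hAB] at this
      exact this
    -- value of f on atomTerm ly k
    have hvy : f (atomTerm ly k) = PP.a := by
      rw [hom_atomTerm hf]
      have h := PP.patom_pos (ly.map f) k hk1 (by rw [List.length_map]; omega)
        (by
          intro s hs
          rw [← List.map_take] at hs
          obtain ⟨s0, hs0, rfl⟩ := List.mem_map.1 hs
          rw [hfv s0 (hmemR s0 (List.take_subset k ly hs0))]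
          by_cases h0 : s0 = hy0
          · rw [if_pos h0]; exact fun hc => PP.noConfusion hc
          · rw [if_neg h0, if_pos hs0]; exact fun hc => PP.noConfusion hc)
        (by
          intro s hs
          rw [← List.map_drop] at hs
          obtain ⟨s0, hs0, rfl⟩ := List.mem_map.1 hs
          rw [hfv s0 (hmemR s0 (List.drop_subset k ly hs0)),
            if_neg (fun hc : s0 = hy0 => hdisjY (hc ▸ hy0T) hs0),
            if_neg (fun hc => hdisjY hc hs0)])
      rw [h.1, ← List.map_take, hT1]
      show f hy0 = PP.a
      rw [hfv hy0 (hmemR hy0 (by rw [hly]; exact List.mem_cons_self)), if_pos rfl]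
    have hvz : f (atomTerm lz l) = PP.b := by
      rw [hom_atomTerm hf]
      have h := PP.patom_pos (lz.map f) l hl1 (by rw [List.length_map]; omega)
        (by
          intro s hs
          rw [← List.map_take] at hs
          obtain ⟨s0, hs0, rfl⟩ := List.mem_map.1 hs
          rw [hfv s0 (hmemRz s0 (List.take_subset l lz hs0))]
          by_cases h0 : s0 = hy0
          · rw [if_pos h0]; exact fun hc => PP.noConfusion hc
          · have hs0A : s0 ∈ ly.take k := by
              have : s0 ∈ {s : S | s ∈ lz.take l} := hs0
              rw [← hAB] at this
              exact this
            rw [if_neg h0, if_pos hs0A]; exact fun hc => PP.noConfusion hc)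
        (by
          intro s hs
          rw [← List.map_drop] at hs
          obtain ⟨s0, hs0, rfl⟩ := List.mem_map.1 hs
          rw [hfv s0 (hmemRz s0 (List.drop_subset l lz hs0)),
            if_neg (fun hc : s0 = hy0 => hdisjZ (hc ▸ hy0B) hs0),
            if_neg (fun hc : s0 ∈ ly.take k => hdisjZ (by
              have : s0 ∈ {s : S | s ∈ ly.take k} := hc
              rw [hAB] at this
              exact this) hs0)])
      rw [h.1, ← List.map_take, hT2]
      show f hz0 = PP.b
      rw [hfv hz0 (hmemRz hz0 (by rw [hlz]; exact List.mem_cons_self)),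
        if_neg (fun hc => hne hc.symm), if_pos hz0A]
    rw [heq, hvz] at hvy
    exact PP.a_ne_b hvy.symm
  -- backward directions
  have bwdCore : k = l → {s : S | s ∈ ly.take k} = {s : S | s ∈ lz.take l} →
      ((ly.take k).Perm (lz.take k) ∧
       (∀ w : S, w ⋏ listJoin (ly.drop k) = w ⋏ listJoin (lz.drop k))) := by
    intro hkl hAB
    subst hkl
    have hmemT : ∀ s, s ∈ ly.take k ↔ s ∈ lz.take k := by
      intro s
      constructor
      · intro h
        have : s ∈ {s : S | s ∈ ly.take k} := h
        rw [hAB] at this; exact this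
      · intro h
        have : s ∈ {s : S | s ∈ lz.take k} := h
        rw [← hAB] at this; exact this
    have hpT : (ly.take k).Perm (lz.take k) :=
      (List.perm_ext_iff_of_nodup ndT1 ndT2).2 hmemT
    have hmemD : ∀ s, s ∈ ly.drop k ↔ s ∈ lz.drop k := by
      intro s
      constructor
      · intro h
        have h1 : s ∈ lz := hyz.subset (List.drop_subset k ly h)
        rcases (hsplitZ s).1 h1 with h2 | h2
        · exact absurd ((hmemT s).2 h2) (fun hc => hdisjY hc h)
        · exact h2
      · intro h
        have h1 : s ∈ ly := hyz.symm.subset (List.drop_subset k lz h)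
        rcases (hsplitY s).1 h1 with h2 | h2
        · exact absurd ((hmemT s).1 h2) (fun hc => hdisjZ hc h)
        · exact h2
    have hpD : (ly.drop k).Perm (lz.drop k) :=
      (List.perm_ext_iff_of_nodup ndD1 ndD2).2 hmemD
    exact ⟨hpT, wedge_join_perm hpD⟩
  have htne : ly.take k ≠ [] := by
    have hpos : 0 < (ly.take k).length := by rw [List.length_take]; omega
    exact List.ne_nil_of_length_pos hpos
  have htne2 : lz.take l ≠ [] := by
    have hpos : 0 < (lz.take l).length := by rw [List.length_take]; omega
    exact List.ne_nil_of_length_pos hpos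
  have bwdD : k = l → {s : S | s ∈ ly.take k} = {s : S | s ∈ lz.take l} →
      Drel (atomTerm ly k) (atomTerm lz l) := by
    intro hkl hAB
    obtain ⟨hpT, hjw⟩ := bwdCore hkl hAB
    subst hkl
    by_cases hlt : k < n
    · have hky : k < ly.length := by omega
      have hkz : k < lz.length := by omega
      unfold atomTerm
      rw [if_pos hky, if_pos hkz]
      exact Drel_diff (meet_perm_absorb2 hpT htne)
        (meet_perm_absorb2 hpT.symm htne2)
        hjw
    · have h1 : ¬ k < ly.length := by omega
      have h2 : ¬ k < lz.length := by omega
      unfold atomTerm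
      rw [if_neg h1, if_neg h2]
      exact Drel_of _ _ (meet_perm_absorb2 hyz (by rw [hly]; simp))
        (meet_perm_absorb2 hyz.symm (by rw [hlz]; simp))
  have bwdE : k = l → {s : S | s ∈ ly.take k} = {s : S | s ∈ lz.take l} →
      ly.head? = lz.head? → atomTerm ly k = atomTerm lz l := by
    intro hkl hAB hhd
    obtain ⟨hpT, hjw⟩ := bwdCore hkl hAB
    subst hkl
    have hh : hy0 = hz0 := by
      rw [hly, hlz] at hhd
      exact Option.some.inj hhd
    obtain ⟨k', hk'⟩ : ∃ k', k = k' + 1 := ⟨k - 1, by omega⟩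
    have hT1 : ly.take k = hy0 :: ty0.take k' := by
      rw [hly, hk', List.take_succ_cons]
    have hT2 : lz.take k = hy0 :: tz0.take k' := by
      rw [hlz, hk', List.take_succ_cons, hh]
    rw [hT1, hT2] at hpT
    have hpt' : (ty0.take k').Perm (tz0.take k') := List.Perm.cons_inv hpT
    have hmeq : listMeet (ly.take k) = listMeet (lz.take k) := by
      rw [hT1, hT2]
      exact meet_perm_head hy0 hpt'
    by_cases hlt : k < n
    · have hky : k < ly.length := by omega
      have hkz : k < lz.length := by omega
      unfold atomTerm
      rw [if_pos hky, if_pos hkz, hmeq]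
      exact diff_congr (hjw (listMeet (lz.take k)))
    · have h1 : ¬ k < ly.length := by omega
      have h2 : ¬ k < lz.length := by omega
      unfold atomTerm
      rw [if_neg h1, if_neg h2]
      have hTL1 : ly.take k = ly := List.take_of_length_le (by omega)
      have hTL2 : lz.take k = lz := List.take_of_length_le (by omega)
      conv_lhs => rw [← hTL1]
      conv_rhs => rw [← hTL2]
      exact hmeq
  constructor
  · constructor
    · exact fwd
    · rintro ⟨hkl, hAB⟩
      exact bwdD hkl hAB
  · constructor
    · intro heq
      obtain ⟨hkl, hAB⟩ := fwd (by rw [heq]; exact Drel_refl _)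
      refine ⟨hkl, hAB, ?_⟩
      rw [hly, hlz]
      exact congrArg some (fwdHead heq hAB)
    · rintro ⟨hkl, hAB, hhd⟩
      exact bwdE hkl hAB hhd
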